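/- Let F = 1 + Σ_{k≥1} ρ_k x^k ∈ ℚ[b, c][[x]] with each ρ_k divisible by b·c in ℚ[b,c], and let g be a further indeterminate. Define τ_k ∈ ℚ[b, c, g] by τ_k = Σ_{ℓ=1}^{k} C(g/(bc), ℓ) Σ_{k1+⋯+kℓ=k} ρ_{k1}⋯ρ_{kℓ}, interpreting C(g/(bc), ℓ) Σ ρ_{k1}⋯ρ_{kℓ} = (g(g-bc)(g-2bc)⋯(g-(ℓ-1)bc)/ℓ!) · Σ (ρ_{k1}/(bc))⋯(ρ_{kℓ}/(bc)). Then each τ_k is a polynomial in b, c, g, it is divisible by g, and its degree in g is exactly k provided ρ_1 ≠ 0. -/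
import Mathlib


open MvPolynomial

/-- In `ℚ[b, c, g]` (variables `X 0 = b`, `X 1 = c`, `X 2 = g`): given tropical coefficients
`ρ_k = bc·σ_k` with `σ_k ∈ ℚ[b, c]`, define
`τ_k = Σ_{ℓ=1}^{k} (g(g-bc)⋯(g-(ℓ-1)bc)/ℓ!) Σ_{k1+⋯+kℓ=k, k_i≥1} (ρ_{k1}/(bc))⋯(ρ_{kℓ}/(bc))`.
Then `τ_k` is a polynomial in `b, c, g` (by construction), divisible by `g`, and its degree
in `g` is exactly `k` provided `ρ_1 ≠ 0` (i.e. `σ_1 ≠ 0`). -/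
noncomputable def Phi17 : MvPolynomial (Fin 3) ℚ ≃ₐ[ℚ] Polynomial (MvPolynomial (Fin 2) ℚ) :=
  (MvPolynomial.renameEquiv ℚ (Equiv.swap (0:Fin 3) 2)).trans (MvPolynomial.finSuccEquiv ℚ 2)

lemma Phi17_X2 : Phi17 (X 2) = Polynomial.X := by
  simp [Phi17, Equiv.swap_apply_right, finSuccEquiv_X_zero]

lemma Phi17_X0 : Phi17 (X 0) = Polynomial.C (X 1) := by
  have h1 : (Equiv.swap (0:Fin 3) 2) 0 = Fin.succ 1 := by decide
  simp only [Phi17, AlgEquiv.trans_apply, renameEquiv_apply, rename_X, h1, finSuccEquiv_X_succ]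

lemma Phi17_X1 : Phi17 (X 1) = Polynomial.C (X 0) := by
  have h1 : (Equiv.swap (0:Fin 3) 2) 1 = Fin.succ 0 := by decide
  simp only [Phi17, AlgEquiv.trans_apply, renameEquiv_apply, rename_X, h1, finSuccEquiv_X_succ]

lemma Phi17_C (a : ℚ) : Phi17 (C a) = Polynomial.C (C a) := by
  have := Phi17.commutes a
  simpa [MvPolynomial.algebraMap_eq, Polynomial.algebraMap_apply] using this

lemma Phi17_natDegree (p : MvPolynomial (Fin 3) ℚ) :
    degreeOf 2 p = (Phi17 p).natDegree := by
  have h1 : degreeOf ((Equiv.swap (0:Fin 3) 2) 2) (rename (⇑(Equiv.swap (0:Fin 3) 2)) p)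
      = degreeOf 2 p := degreeOf_rename_of_injective (Equiv.injective _) 2
  rw [← h1, Equiv.swap_apply_right]
  exact (natDegree_finSuccEquiv _).symm

lemma Phi17_rename (q : MvPolynomial (Fin 2) ℚ) :
    Phi17 (rename Fin.castSucc q) = Polynomial.C (rename (⇑(Equiv.swap (0:Fin 2) 1)) q) := by
  have h : Phi17.toAlgHom.comp (rename (Fin.castSucc : Fin 2 → Fin 3)) =
      Polynomial.CAlgHom.comp (rename (⇑(Equiv.swap (0:Fin 2) 1))) := by
    apply algHom_ext
    intro i
    fin_cases i
    · simpa [Polynomial.CAlgHom] using Phi17_X0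
    · simpa [Polynomial.CAlgHom] using Phi17_X1
  exact DFunLike.congr_fun h q

lemma filter17 (k : ℕ) :
    (Finset.Nat.antidiagonalTuple k k).filter (fun f => ∀ i, 0 < f i)
      = {fun _ => 1} := by
  ext f
  simp only [Finset.mem_filter, Finset.Nat.mem_antidiagonalTuple, Finset.mem_singleton]
  constructor
  · rintro ⟨hsum, hpos⟩
    funext i
    have h1 : ∀ j ∈ (Finset.univ : Finset (Fin k)), 1 ≤ f j := fun j _ => hpos j
    have hs : ∑ j : Fin k, (1:ℕ) = ∑ j : Fin k, f j := by
      simp [hsum]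
    exact ((Finset.sum_eq_sum_iff_of_le h1).mp hs i (Finset.mem_univ i)).symm
  · rintro rfl
    exact ⟨by simp, fun i => one_pos⟩

theorem stmt_17 (σ : ℕ → MvPolynomial (Fin 2) ℚ) (k : ℕ) (hk : 1 ≤ k) :
    (X 2 : MvPolynomial (Fin 3) ℚ) ∣
        (∑ ℓ ∈ Finset.Icc 1 k,
          ((Nat.factorial ℓ : ℚ)⁻¹ •
              ∏ m ∈ Finset.range ℓ,
                ((X 2 : MvPolynomial (Fin 3) ℚ) - (m : MvPolynomial (Fin 3) ℚ) * (X 0 * X 1))) *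
            ∑ f ∈ (Finset.Nat.antidiagonalTuple ℓ k).filter (fun f => ∀ i, 0 < f i),
              ∏ i, MvPolynomial.rename Fin.castSucc (σ (f i))) ∧
    (σ 1 ≠ 0 →
      MvPolynomial.degreeOf 2
          (∑ ℓ ∈ Finset.Icc 1 k,
            ((Nat.factorial ℓ : ℚ)⁻¹ •
                ∏ m ∈ Finset.range ℓ,
                  ((X 2 : MvPolynomial (Fin 3) ℚ) - (m : MvPolynomial (Fin 3) ℚ) *
                    (X 0 * X 1))) *
              ∑ f ∈ (Finset.Nat.antidiagonalTuple ℓ k).filter (fun f => ∀ i, 0 < f i),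
                ∏ i, MvPolynomial.rename Fin.castSucc (σ (f i))) = k) := by
  classical
  constructor
  · refine Finset.dvd_sum fun ℓ hℓ => ?_
    refine Dvd.dvd.mul_right ?_ _
    rw [MvPolynomial.smul_eq_C_mul]
    refine Dvd.dvd.mul_left ?_ _
    have h0 : (0:ℕ) ∈ Finset.range ℓ :=
      Finset.mem_range.mpr (Finset.mem_Icc.mp hℓ).1
    have := Finset.dvd_prod_of_mem
      (fun m : ℕ => ((X 2 : MvPolynomial (Fin 3) ℚ)
        - (m : MvPolynomial (Fin 3) ℚ) * (X 0 * X 1))) h0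
    simpa using this
  · intro hσ
    set s : ℕ → MvPolynomial (Fin 2) ℚ := fun ℓ =>
      ∑ f ∈ (Finset.Nat.antidiagonalTuple ℓ k).filter (fun f => ∀ i, 0 < f i),
        ∏ i, rename (⇑(Equiv.swap (0:Fin 2) 1)) (σ (f i)) with hs
    set G : ℕ → Polynomial (MvPolynomial (Fin 2) ℚ) := fun ℓ =>
      (Polynomial.C (C ((Nat.factorial ℓ : ℚ)⁻¹)) *
        ∏ m ∈ Finset.range ℓ,
          (Polynomial.X - (m : Polynomial (MvPolynomial (Fin 2) ℚ)) *
            (Polynomial.C (X 1) * Polynomial.C (X 0)))) *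
        Polynomial.C (s ℓ) with hG
    have hCs : ∀ ℓ, Polynomial.C (s ℓ)
        = ∑ f ∈ (Finset.Nat.antidiagonalTuple ℓ k).filter (fun f => ∀ i, 0 < f i),
            ∏ i, Polynomial.C (rename (⇑(Equiv.swap (0:Fin 2) 1)) (σ (f i))) := by
      intro ℓ
      rw [hs, map_sum]
      exact Finset.sum_congr rfl fun f _ => map_prod _ _ _
    have hmap : ∀ ℓ,
        Phi17 (((Nat.factorial ℓ : ℚ)⁻¹ •
            ∏ m ∈ Finset.range ℓ,
              ((X 2 : MvPolynomial (Fin 3) ℚ) - (m : MvPolynomial (Fin 3) ℚ) * (X 0 * X 1))) *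
          ∑ f ∈ (Finset.Nat.antidiagonalTuple ℓ k).filter (fun f => ∀ i, 0 < f i),
            ∏ i, MvPolynomial.rename Fin.castSucc (σ (f i))) = G ℓ := by
      intro ℓ
      rw [MvPolynomial.smul_eq_C_mul]
      simp only [hG]
      rw [hCs]
      simp only [map_mul, map_prod, map_sum, map_sub, map_natCast, Phi17_C, Phi17_X2,
        Phi17_X0, Phi17_X1, Phi17_rename]
    have hfac : ∀ m : ℕ,
        (Polynomial.X - (m : Polynomial (MvPolynomial (Fin 2) ℚ)) *
            (Polynomial.C (X 1) * Polynomial.C (X 0)))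
          = Polynomial.X - Polynomial.C ((m : MvPolynomial (Fin 2) ℚ) * (X 1 * X 0)) := by
      intro m
      rw [Polynomial.C_mul, Polynomial.C_mul, Polynomial.C_eq_natCast]
    have hmonic1 : ∀ m : ℕ,
        (Polynomial.X - (m : Polynomial (MvPolynomial (Fin 2) ℚ)) *
          (Polynomial.C (X 1) * Polynomial.C (X 0))).Monic := by
      intro m
      rw [hfac m]
      exact Polynomial.monic_X_sub_C _
    have hdeg1 : ∀ m : ℕ,
        (Polynomial.X - (m : Polynomial (MvPolynomial (Fin 2) ℚ)) *
          (Polynomial.C (X 1) * Polynomial.C (X 0))).natDegree = 1 := by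
      intro m
      rw [hfac m]
      exact Polynomial.natDegree_X_sub_C _
    have hmonic : ∀ ℓ, (∏ m ∈ Finset.range ℓ,
        (Polynomial.X - (m : Polynomial (MvPolynomial (Fin 2) ℚ)) *
          (Polynomial.C (X 1) * Polynomial.C (X 0)))).Monic :=
      fun ℓ => Polynomial.monic_prod_of_monic _ _ fun m _ => hmonic1 m
    have hdegP : ∀ ℓ, (∏ m ∈ Finset.range ℓ,
        (Polynomial.X - (m : Polynomial (MvPolynomial (Fin 2) ℚ)) *
          (Polynomial.C (X 1) * Polynomial.C (X 0)))).natDegree = ℓ := by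
      intro ℓ
      rw [Polynomial.natDegree_prod _ _ fun m _ => (hmonic1 m).ne_zero]
      simp [hdeg1]
    have hCfne : ∀ ℓ : ℕ,
        (Polynomial.C (C ((Nat.factorial ℓ : ℚ)⁻¹)) :
          Polynomial (MvPolynomial (Fin 2) ℚ)) ≠ 0 := by
      intro ℓ
      simp [Nat.factorial_ne_zero]
    have hGle : ∀ ℓ, (G ℓ).natDegree ≤ ℓ := by
      intro ℓ
      simp only [hG]
      refine (Polynomial.natDegree_mul_le).trans ?_
      simp only [Polynomial.natDegree_C, add_zero]
      refine (Polynomial.natDegree_mul_le).trans ?_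
      simp [hdegP ℓ]
    have hsk : s k = (rename (⇑(Equiv.swap (0:Fin 2) 1)) (σ 1)) ^ k := by
      rw [hs]
      simp only [filter17, Finset.sum_singleton]
      simp
    have hskne : s k ≠ 0 := by
      rw [hsk]
      refine pow_ne_zero _ fun h => hσ ?_
      exact (rename_injective _ (Equiv.injective _)) (by simpa using h)
    have hGk : (G k).natDegree = k := by
      simp only [hG]
      rw [Polynomial.natDegree_mul (mul_ne_zero (hCfne k) (hmonic k).ne_zero)
        (Polynomial.C_ne_zero.mpr hskne),
        Polynomial.natDegree_mul (hCfne k) (hmonic k).ne_zero]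
      simp [hdegP k]
    rw [Phi17_natDegree, map_sum]
    rw [Finset.sum_congr rfl fun ℓ _ => hmap ℓ]
    rw [← Finset.sum_erase_add _ _ (Finset.mem_Icc.mpr ⟨hk, le_refl k⟩)]
    rw [Polynomial.natDegree_add_eq_right_of_natDegree_lt, hGk]
    rw [hGk]
    refine lt_of_le_of_lt (Polynomial.natDegree_sum_le_of_forall_le _ _ fun ℓ hℓ => ?_)
      (Nat.sub_lt hk one_pos)
    have hℓ' := Finset.mem_erase.mp hℓ
    have hle : ℓ ≤ k - 1 := by
      have := (Finset.mem_Icc.mp hℓ'.2).2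
      omega
    exact (hGle ℓ).trans hle
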